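/- For any measurement assemblage {B_{a|x}} and any density matrix ρ, the steerable weight of {ρ^{1/2} B_{a|x} ρ^{1/2}} is at most the incompatible weight of {B_{a|x}}: SW(ρ^{1/2} B ρ^{1/2}) ≤ IW(B). -/

import Mathlib

open Matrix Kronecker BigOperators ComplexOrder

noncomputable section

/-- A density matrix: positive semidefinite with unit trace. -/
def IsDensity {d : ℕ} (ρ : Matrix (Fin d) (Fin d) ℂ) : Prop :=
  ρ.PosSemidef ∧ ρ.trace = 1

/-- A POVM: positive semidefinite effects summing to the identity. -/
def IsPOVM {d nl : ℕ} (G : Fin nl → Matrix (Fin d) (Fin d) ℂ) : Prop :=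
  (∀ l, (G l).PosSemidef) ∧ ∑ l, G l = 1

/-- A measurement assemblage: for each setting `x`, a POVM `a ↦ M x a`. -/
def IsMA {d na nx : ℕ} (M : Fin nx → Fin na → Matrix (Fin d) (Fin d) ℂ) : Prop :=
  (∀ x a, (M x a).PosSemidef) ∧ ∀ x, ∑ a, M x a = 1

/-- Joint measurability: `M x a = ∑ λ p(a|x,λ) G λ` for a parent POVM `G`. -/
def JM {d na nx : ℕ} (M : Fin nx → Fin na → Matrix (Fin d) (Fin d) ℂ) : Prop :=
  ∃ (nl : ℕ) (G : Fin nl → Matrix (Fin d) (Fin d) ℂ)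
    (p : Fin nx → Fin na → Fin nl → ℝ),
    IsPOVM G ∧ (∀ x a l, 0 ≤ p x a l) ∧ (∀ x l, ∑ a, p x a l = 1) ∧
    ∀ x a, M x a = ∑ l, (p x a l : ℂ) • G l

/-- A state assemblage: PSD elements with an `x`-independent reduced density matrix. -/
def IsSA {d na nx : ℕ} (σ : Fin nx → Fin na → Matrix (Fin d) (Fin d) ℂ) : Prop :=
  (∀ x a, (σ x a).PosSemidef) ∧
  ∃ ρ : Matrix (Fin d) (Fin d) ℂ, IsDensity ρ ∧ ∀ x, ∑ a, σ x a = ρ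

/-- Local-hidden-state model: `σ x a = ∑ λ q(λ) p(a|x,λ) ρ_λ`. -/
def LHS {d na nx : ℕ} (σ : Fin nx → Fin na → Matrix (Fin d) (Fin d) ℂ) : Prop :=
  ∃ (nl : ℕ) (q : Fin nl → ℝ) (p : Fin nx → Fin na → Fin nl → ℝ)
    (ρ : Fin nl → Matrix (Fin d) (Fin d) ℂ),
    (∀ l, 0 ≤ q l) ∧ (∑ l, q l = 1) ∧
    (∀ x a l, 0 ≤ p x a l) ∧ (∀ x l, ∑ a, p x a l = 1) ∧
    (∀ l, IsDensity (ρ l)) ∧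
    ∀ x a, σ x a = ∑ l, ((q l * p x a l : ℝ) : ℂ) • ρ l

/-- Incompatibility robustness. -/
def IR {d na nx : ℕ} (B : Fin nx → Fin na → Matrix (Fin d) (Fin d) ℂ) : ℝ :=
  sInf {t : ℝ | 0 ≤ t ∧ ∃ N, IsMA N ∧
    JM (fun x a => (((1 + t : ℝ))⁻¹ : ℂ) • (B x a + (t : ℂ) • N x a))}

/-- Steering robustness. -/
def SR {d na nx : ℕ} (σ : Fin nx → Fin na → Matrix (Fin d) (Fin d) ℂ) : ℝ :=
  sInf {t : ℝ | 0 ≤ t ∧ ∃ ξ, IsSA ξ ∧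
    LHS (fun x a => (((1 + t : ℝ))⁻¹ : ℂ) • (σ x a + (t : ℂ) • ξ x a))}

/-- Incompatible weight. -/
def IW {d na nx : ℕ} (B : Fin nx → Fin na → Matrix (Fin d) (Fin d) ℂ) : ℝ :=
  sInf {t : ℝ | 0 ≤ t ∧ t ≤ 1 ∧ ∃ N O, IsMA N ∧ JM O ∧
    ∀ x a, B x a = (t : ℂ) • N x a + ((1 - t : ℝ) : ℂ) • O x a}

/-- Steerable weight. -/
def SW {d na nx : ℕ} (σ : Fin nx → Fin na → Matrix (Fin d) (Fin d) ℂ) : ℝ :=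
  sInf {t : ℝ | 0 ≤ t ∧ t ≤ 1 ∧ ∃ ξ τ, IsSA ξ ∧ LHS τ ∧
    ∀ x a, σ x a = (t : ℂ) • ξ x a + ((1 - t : ℝ) : ℂ) • τ x a}

/-- Positive map on matrices. -/
def PosMap {d : ℕ} (E : Matrix (Fin d) (Fin d) ℂ →ₗ[ℂ] Matrix (Fin d) (Fin d) ℂ) : Prop :=
  ∀ X, X.PosSemidef → (E X).PosSemidef

/-- Trace-nonincreasing on PSD matrices. -/
def TNI {d : ℕ} (E : Matrix (Fin d) (Fin d) ℂ →ₗ[ℂ] Matrix (Fin d) (Fin d) ℂ) : Prop :=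
  ∀ X : Matrix (Fin d) (Fin d) ℂ, X.PosSemidef → (E X).trace.re ≤ X.trace.re

/-- `Ed` is the Hilbert–Schmidt adjoint of `E`. -/
def IsAdjoint {d : ℕ} (E Ed : Matrix (Fin d) (Fin d) ℂ →ₗ[ℂ] Matrix (Fin d) (Fin d) ℂ) : Prop :=
  ∀ X Y, ((E X)ᴴ * Y).trace = (Xᴴ * (Ed Y)).trace

/-- Partial trace over the first tensor factor. -/
def ptraceA {d d' : ℕ} (M : Matrix (Fin d × Fin d') (Fin d × Fin d') ℂ) :
    Matrix (Fin d') (Fin d') ℂ :=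
  Matrix.of fun i j => ∑ k : Fin d, M (k, i) (k, j)

/-- The map `E ⊗ id` acting on bipartite matrices. -/
def tensId {d d' : ℕ} (E : Matrix (Fin d) (Fin d) ℂ →ₗ[ℂ] Matrix (Fin d) (Fin d) ℂ)
    (M : Matrix (Fin d × Fin d') (Fin d × Fin d') ℂ) :
    Matrix (Fin d × Fin d') (Fin d × Fin d') ℂ :=
  Matrix.of fun p q => E (Matrix.of fun i k => M (i, p.2) (k, q.2)) p.1 q.1

/-- The square root of a PSD matrix, as `Matrix.PosSemidef.sqrt` was defined in Mathlib
(Dec 2024); removed from current Mathlib. -/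
def Matrix.PosSemidef.sqrt {n : Type*} [Fintype n] [DecidableEq n] {A : Matrix n n ℂ}
    (hA : A.PosSemidef) : Matrix n n ℂ :=
  (hA.1.eigenvectorUnitary : Matrix n n ℂ) *
    diagonal (fun i => ((Real.sqrt (hA.1.eigenvalues i) : ℝ) : ℂ)) *
    (star hA.1.eigenvectorUnitary : Matrix n n ℂ)

lemma Matrix.PosSemidef.posSemidef_sqrt {n : Type*} [Fintype n] [DecidableEq n]
    {A : Matrix n n ℂ} (hA : A.PosSemidef) : hA.sqrt.PosSemidef := by
  unfold Matrix.PosSemidef.sqrt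
  have hD : (diagonal (fun i => ((Real.sqrt (hA.1.eigenvalues i) : ℝ) : ℂ))).PosSemidef :=
    Matrix.PosSemidef.diagonal (fun i => by
      simp only [Pi.zero_apply]
      exact Complex.zero_le_real.mpr (Real.sqrt_nonneg _))
  exact hD.mul_mul_conjTranspose_same (hA.1.eigenvectorUnitary : Matrix n n ℂ)

lemma Matrix.PosSemidef.sqrt_mul_self {n : Type*} [Fintype n] [DecidableEq n]
    {A : Matrix n n ℂ} (hA : A.PosSemidef) : hA.sqrt * hA.sqrt = A := by
  unfold Matrix.PosSemidef.sqrt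
  set U : Matrix n n ℂ := (hA.1.eigenvectorUnitary : Matrix n n ℂ) with hU
  have hUU : (star hA.1.eigenvectorUnitary : Matrix n n ℂ) * U = 1 :=
    Unitary.coe_star_mul_self _
  have key : U * diagonal (fun i => ((Real.sqrt (hA.1.eigenvalues i) : ℝ) : ℂ)) *
      (star hA.1.eigenvectorUnitary : Matrix n n ℂ) *
      (U * diagonal (fun i => ((Real.sqrt (hA.1.eigenvalues i) : ℝ) : ℂ)) *
      (star hA.1.eigenvectorUnitary : Matrix n n ℂ)) =
      U * (diagonal (fun i => ((Real.sqrt (hA.1.eigenvalues i) : ℝ) : ℂ)) *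
      diagonal (fun i => ((Real.sqrt (hA.1.eigenvalues i) : ℝ) : ℂ))) *
      (star hA.1.eigenvectorUnitary : Matrix n n ℂ) := by
    simp only [Matrix.mul_assoc]
    rw [← Matrix.mul_assoc (star hA.1.eigenvectorUnitary : Matrix n n ℂ) U, hUU,
      Matrix.one_mul]
  rw [key, diagonal_mul_diagonal]
  have hsq : (fun i => ((Real.sqrt (hA.1.eigenvalues i) : ℝ) : ℂ) *
      ((Real.sqrt (hA.1.eigenvalues i) : ℝ) : ℂ)) =
      (RCLike.ofReal ∘ hA.1.eigenvalues : n → ℂ) := by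
    funext i
    rw [← Complex.ofReal_mul, Real.mul_self_sqrt (hA.eigenvalues_nonneg i)]
    rfl
  rw [hsq]
  conv_rhs => rw [hA.1.spectral_theorem]
  rw [Unitary.conjStarAlgAut_apply]

section Helpers
open Matrix

variable {d : ℕ}

lemma psd_smul_real {M : Matrix (Fin d) (Fin d) ℂ} (hM : M.PosSemidef) {c : ℝ} (hc : 0 ≤ c) :
    ((c : ℂ) • M).PosSemidef := by
  constructor
  · rw [Matrix.IsHermitian, conjTranspose_smul, hM.1.eq]
    congr 1
    simp [Complex.star_def, Complex.conj_ofReal]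
  · exact (hM.smul (Complex.zero_le_real.mpr hc)).2

lemma trace_conj_expand (B : Matrix (Fin d) (Fin d) ℂ) :
    (Bᴴ * B).trace = ∑ i, ∑ j, star (B j i) * B j i := by
  simp [Matrix.trace, Matrix.diag, Matrix.mul_apply, Matrix.conjTranspose_apply]

lemma psd_trace_nonneg {M : Matrix (Fin d) (Fin d) ℂ} (hM : M.PosSemidef) :
    0 ≤ M.trace := by
  exact hM.trace_nonneg

lemma psd_trace_eq_zero {M : Matrix (Fin d) (Fin d) ℂ} (hM : M.PosSemidef)
    (h : M.trace = 0) : M = 0 := by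
  exact hM.trace_eq_zero_iff.mp h

lemma psd_trace_real {M : Matrix (Fin d) (Fin d) ℂ} (hM : M.PosSemidef) :
    M.trace = ((M.trace.re : ℝ) : ℂ) := by
  have h := Complex.nonneg_iff.mp (psd_trace_nonneg hM)
  exact Complex.ext rfl (by simp [← h.2])

end Helpers

/-- SW(ρ^{1/2} B ρ^{1/2}) ≤ IW(B). -/
theorem sw_conj_le_iw {d na nx : ℕ}
    (B : Fin nx → Fin na → Matrix (Fin d) (Fin d) ℂ) (hB : IsMA B)
    (ρ : Matrix (Fin d) (Fin d) ℂ) (hρ : ρ.PosSemidef) (hρ1 : ρ.trace = 1) :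
    SW (fun x a => hρ.sqrt * B x a * hρ.sqrt) ≤ IW B := by
  classical
  have hd : 0 < d := by
    by_contra h
    push_neg at h
    have hd0 : d = 0 := Nat.le_zero.mp h
    subst hd0
    simp [Matrix.trace] at hρ1
  set s := hρ.sqrt with hs
  have hss : s * s = ρ := hρ.sqrt_mul_self
  have hsherm : sᴴ = s := hρ.posSemidef_sqrt.isHermitian.eq
  have hspsd : s.PosSemidef := hρ.posSemidef_sqrt
  -- conjugation preserves PSD
  have hconj : ∀ M : Matrix (Fin d) (Fin d) ℂ, M.PosSemidef → (s * M * s).PosSemidef := by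
    intro M hM
    have := hM.mul_mul_conjTranspose_same s
    rwa [hsherm] at this
  refine csInf_le_csInf ⟨0, fun t ht => ht.1⟩ ?_ ?_
  · -- IW set nonempty: t = 1
    have hna : 0 < na ∨ nx = 0 := by
      by_cases hx : nx = 0
      · exact Or.inr hx
      · left
        by_contra hna
        push_neg at hna
        have hna0 : na = 0 := Nat.le_zero.mp hna
        obtain ⟨x⟩ : Nonempty (Fin nx) := ⟨⟨0, Nat.pos_of_ne_zero hx⟩⟩
        have := hB.2 x
        subst hna0
        have h00 := congrFun (congrFun this ⟨0, hd⟩) ⟨0, hd⟩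
        simp [Matrix.one_apply] at h00
    refine ⟨1, le_of_lt one_pos, le_refl 1, B, fun _ _ => (((na : ℝ)⁻¹ : ℝ) : ℂ) • 1, hB,
      ⟨1, fun _ => 1, fun _ _ _ => (na : ℝ)⁻¹, ⟨fun _ => Matrix.PosSemidef.one, by simp⟩,
        fun _ _ _ => by positivity, ?_, fun x a => by simp⟩, fun x a => by
          push_cast; simp⟩
    intro x l
    rcases hna with hna | hnx
    · simp [Finset.sum_const]
      field_simp
    · have := x.isLt; omega
  · -- main inclusion
    rintro t ⟨ht0, ht1, N, O, hN, ⟨nl, G, p, hG, hp0, hp1, hO⟩, hdec⟩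
    refine ⟨ht0, ht1, fun x a => s * N x a * s, fun x a => s * O x a * s, ?_, ?_, ?_⟩
    · -- IsSA
      refine ⟨fun x a => hconj _ (hN.1 x a), ρ, ⟨hρ, hρ1⟩, fun x => ?_⟩
      have : ∑ a, s * N x a * s = s * (∑ a, N x a) * s := by
        rw [Finset.mul_sum, Finset.sum_mul]
      rw [this, hN.2 x, mul_one, hss]
    · -- LHS
      set K : Fin nl → Matrix (Fin d) (Fin d) ℂ := fun l => s * G l * s with hK
      have hKpsd : ∀ l, (K l).PosSemidef := fun l => hconj _ (hG.1 l)
      set q : Fin nl → ℝ := fun l => ((K l).trace).re with hq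
      have hqnn : ∀ l, 0 ≤ q l := fun l =>
        (Complex.nonneg_iff.mp (psd_trace_nonneg (hKpsd l))).1
      have hKtr : ∀ l, (K l).trace = ((q l : ℝ) : ℂ) := fun l => psd_trace_real (hKpsd l)
      have hqsum : ∑ l, q l = 1 := by
        have h1 : ∑ l, (K l).trace = 1 := by
          have : ∑ l, K l = s * (∑ l, G l) * s := by
            rw [Finset.mul_sum, Finset.sum_mul]
          rw [← Matrix.trace_sum, this, hG.2, mul_one, hss, hρ1]
        have h2 : ((∑ l, q l : ℝ) : ℂ) = 1 := by
          push_cast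
          rw [← h1]
          exact (Finset.sum_congr rfl fun l _ => (hKtr l).symm)
        exact_mod_cast h2
      set ρ' : Fin nl → Matrix (Fin d) (Fin d) ℂ := fun l =>
        if q l = 0 then (((d : ℝ)⁻¹ : ℝ) : ℂ) • 1 else (((q l)⁻¹ : ℝ) : ℂ) • K l with hρ'
      have hρ'dens : ∀ l, IsDensity (ρ' l) := by
        intro l
        simp only [hρ']
        split_ifs with h
        · refine ⟨psd_smul_real Matrix.PosSemidef.one (by positivity), ?_⟩
          simp [Matrix.trace_smul, Matrix.trace_one]
          field_simp
        · refine ⟨psd_smul_real (hKpsd l) (inv_nonneg.mpr (hqnn l)), ?_⟩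
          rw [Matrix.trace_smul, hKtr l, smul_eq_mul, ← Complex.ofReal_mul,
            inv_mul_cancel₀ h, Complex.ofReal_one]
      have hKexp : ∀ l, K l = ((q l : ℝ) : ℂ) • ρ' l := by
        intro l
        simp only [hρ']
        split_ifs with h
        · rw [psd_trace_eq_zero (hKpsd l) (by rw [hKtr l, h]; simp), h]
          simp
        · rw [smul_smul, ← Complex.ofReal_mul, mul_inv_cancel₀ h]
          simp
      refine ⟨nl, q, p, ρ', hqnn, hqsum, hp0, hp1, hρ'dens, fun x a => ?_⟩
      have h1 : s * O x a * s = ∑ l, ((p x a l : ℝ) : ℂ) • K l := by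
        rw [hO x a, Finset.mul_sum, Finset.sum_mul]
        exact Finset.sum_congr rfl fun l _ => by
          rw [Matrix.mul_smul, Matrix.smul_mul]
      show s * O x a * s = _
      rw [h1]
      refine Finset.sum_congr rfl fun l _ => ?_
      rw [hKexp l, smul_smul, ← Complex.ofReal_mul, mul_comm]
    · intro x a
      show s * B x a * s = _
      rw [hdec x a]
      simp only []
      rw [Matrix.mul_add, Matrix.add_mul, Matrix.mul_smul, Matrix.smul_mul,
        Matrix.mul_smul, Matrix.smul_mul]
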